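/- Let P be a finite poset whose Hasse diagram, viewed as an undirected graph, is a path e₁ — e₂ — ... — eₙ (a 'fence-like' poset where each consecutive pair is a cover relation in one direction or the other, and these are the only covers). Then the number of order ideals of P satisfies the recursion: if eₙ₋₁ ⋖ eₙ then N(P) = N(P \ {eₙ}) + N(P \ {eₙ₋₁, eₙ}) when eₙ₋₂ ⋗ eₙ₋₁, and more generally the number of order ideals of any such path-shaped poset on n elements is at least n+1 and at most the (n+2)-nd Fibonacci number, with the maximum attained exactly by the zigzag (alternating) orientation. -/

import Mathlib

open Finset
open scoped Classical

/-- An order ideal (down-closed subset) of a poset, as a `Finset`. -/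
def IsIdealF {P : Type*} [PartialOrder P] (I : Finset P) : Prop :=
  ∀ x ∈ I, ∀ y, y ≤ x → y ∈ I

/-- The weighted sum of order ideals: `F(P) = Σ_I Π_{e ∈ I} w e`. -/
noncomputable def idealSum (P : Type*) [Fintype P] [PartialOrder P] {R : Type*}
    [CommSemiring R] (w : P → R) : R :=
  ∑ I ∈ Finset.univ.filter (fun I : Finset P => IsIdealF I), ∏ e ∈ I, w e

def okB (dir x y : Bool) : Bool := bif dir then (x || !y) else (y || !x)

def ValidF (n : ℕ) (d : ℕ → Bool) (s : Fin n → Bool) : Prop :=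
  ∀ i : ℕ, ∀ h : i + 1 < n, okB (d i) (s ⟨i, Nat.lt_of_succ_lt h⟩) (s ⟨i+1, h⟩) = true

noncomputable def VT (m : ℕ) (d : ℕ → Bool) : ℕ :=
  Nat.card {s : Fin (m+1) → Bool // ValidF (m+1) d s}
noncomputable def VA (m : ℕ) (d : ℕ → Bool) : ℕ :=
  Nat.card {s : Fin (m+1) → Bool // ValidF (m+1) d s ∧ s (Fin.last m) = true}
noncomputable def VB (m : ℕ) (d : ℕ → Bool) : ℕ :=
  Nat.card {s : Fin (m+1) → Bool // ValidF (m+1) d s ∧ s (Fin.last m) = false}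

lemma validF_one (d : ℕ → Bool) (s : Fin 1 → Bool) : ValidF 1 d s := by
  intro i h; omega

lemma fin_one_ext (s t : Fin 1 → Bool) (h : s (Fin.last 0) = t (Fin.last 0)) : s = t := by
  ext ⟨i, hi⟩
  interval_cases i
  exact h

lemma VA_zero (d : ℕ → Bool) : VA 0 d = 1 := by
  rw [VA, Nat.card_eq_one_iff_unique]
  constructor
  · constructor
    rintro ⟨s, _, hs⟩ ⟨t, _, ht⟩
    exact Subtype.ext (fin_one_ext _ _ (hs.trans ht.symm))
  · exact ⟨fun _ => true, validF_one d _, rfl⟩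

lemma VB_zero (d : ℕ → Bool) : VB 0 d = 1 := by
  rw [VB, Nat.card_eq_one_iff_unique]
  constructor
  · constructor
    rintro ⟨s, _, hs⟩ ⟨t, _, ht⟩
    exact Subtype.ext (fin_one_ext _ _ (hs.trans ht.symm))
  · exact ⟨fun _ => false, validF_one d _, rfl⟩

lemma VT_eq (m : ℕ) (d : ℕ → Bool) : VT m d = VA m d + VB m d := by
  rw [VT, VA, VB,
    ← Nat.card_congr (Equiv.sumCompl (fun s : {s : Fin (m+1) → Bool // ValidF (m+1) d s} =>
      s.1 (Fin.last m) = true)), Nat.card_sum]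
  congr 1
  · exact Nat.card_congr (Equiv.subtypeSubtypeEquivSubtypeInter
      (fun s : Fin (m+1) → Bool => ValidF (m+1) d s) (fun s => s (Fin.last m) = true))
  · refine Nat.card_congr (((Equiv.subtypeSubtypeEquivSubtypeInter
      (fun s : Fin (m+1) → Bool => ValidF (m+1) d s)
      (fun s => ¬ s (Fin.last m) = true))).trans
      (Equiv.subtypeEquivRight ?_))
    intro s; simp

lemma snoc_lt {m : ℕ} (t : Fin (m+1) → Bool) (c : Bool) (i : ℕ) (h : i < m+1) (h2 : i < m+2) :
    (Fin.snoc t c : Fin (m+2) → Bool) ⟨i, h2⟩ = t ⟨i, h⟩ := by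
  have : (⟨i, h2⟩ : Fin (m+2)) = Fin.castSucc ⟨i, h⟩ := rfl
  rw [this, Fin.snoc_castSucc]

lemma snoc_last' {m : ℕ} (t : Fin (m+1) → Bool) (c : Bool) (h2 : m+1 < m+2) :
    (Fin.snoc t c : Fin (m+2) → Bool) ⟨m+1, h2⟩ = c := by
  have : (⟨m+1, h2⟩ : Fin (m+2)) = Fin.last (m+1) := rfl
  rw [this, Fin.snoc_last]

lemma valid_snoc (m : ℕ) (d : ℕ → Bool) (t : Fin (m+1) → Bool) (c : Bool) :
    ValidF (m+2) d (Fin.snoc t c) ↔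
      (ValidF (m+1) d t ∧ okB (d m) (t (Fin.last m)) c = true) := by
  constructor
  · intro hv
    constructor
    · intro i h
      have := hv i (by omega)
      rwa [snoc_lt t c i (by omega) (by omega), snoc_lt t c (i+1) (by omega) (by omega)] at this
    · have := hv m (by omega)
      rwa [snoc_lt t c m (by omega) (by omega), snoc_last' t c (by omega)] at this
  · rintro ⟨hv, hok⟩ i h
    rcases Nat.lt_or_ge (i+1) (m+1) with h1 | h1
    · rw [snoc_lt t c i (by omega) (by omega), snoc_lt t c (i+1) (by omega) (by omega)]
      exact hv i h1
    · have hi : i = m := by omega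
      subst hi
      rw [snoc_lt t c i (by omega) (by omega), snoc_last' t c (by omega)]
      exact hok

lemma card_snoc (m : ℕ) (d : ℕ → Bool) (c : Bool) :
    Nat.card {s : Fin (m+2) → Bool // ValidF (m+2) d s ∧ s (Fin.last (m+1)) = c} =
      Nat.card {t : Fin (m+1) → Bool // ValidF (m+1) d t ∧
        okB (d m) (t (Fin.last m)) c = true} := by
  refine (Nat.card_eq_of_bijective (fun t : {t : Fin (m+1) → Bool // ValidF (m+1) d t ∧
        okB (d m) (t (Fin.last m)) c = true} =>
      (⟨Fin.snoc t.1 c, (valid_snoc m d t.1 c).2 t.2, by simp⟩ :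
        {s : Fin (m+2) → Bool // ValidF (m+2) d s ∧ s (Fin.last (m+1)) = c}))
      ⟨?_, ?_⟩).symm
  · rintro ⟨t1, h1⟩ ⟨t2, h2⟩ h
    have := congrArg (fun s => Fin.init s.1) h
    simpa [Fin.init_snoc] using this
  · rintro ⟨s, hv, hl⟩
    refine ⟨⟨Fin.init s, ?_⟩, ?_⟩
    · have : s = Fin.snoc (Fin.init s) c := by
        rw [← hl]; exact (Fin.snoc_init_self s).symm
      rw [this] at hv
      exact (valid_snoc m d (Fin.init s) c).1 hv
    · apply Subtype.ext
      simp only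
      rw [← hl]; exact Fin.snoc_init_self s

lemma okB_tt (x : Bool) : okB true x true = x := by cases x <;> rfl
lemma okB_tf (x : Bool) : okB true x false = true := by cases x <;> rfl
lemma okB_ft (x : Bool) : okB false x true = true := by cases x <;> rfl
lemma okB_ff (x : Bool) : okB false x false = !x := by cases x <;> rfl

lemma VA_succ (m : ℕ) (d : ℕ → Bool) :
    VA (m+1) d = if d m then VA m d else VT m d := by
  have h : VA (m+1) d = Nat.card {t : Fin (m+1) → Bool // ValidF (m+1) d t ∧
      okB (d m) (t (Fin.last m)) true = true} := card_snoc m d true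
  rw [h]
  cases hd : d m
  · rw [if_neg (by simp [hd]), VT]
    refine Nat.card_congr (Equiv.subtypeEquivRight ?_)
    intro t; simp [hd, okB_ft]
  · rw [if_pos (by simp [hd]), VA]
    refine Nat.card_congr (Equiv.subtypeEquivRight ?_)
    intro t; simp [hd, okB_tt]

lemma VB_succ (m : ℕ) (d : ℕ → Bool) :
    VB (m+1) d = if d m then VT m d else VB m d := by
  have h : VB (m+1) d = Nat.card {t : Fin (m+1) → Bool // ValidF (m+1) d t ∧
      okB (d m) (t (Fin.last m)) false = true} := card_snoc m d false
  rw [h]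
  cases hd : d m
  · rw [if_neg (by simp [hd]), VB]
    refine Nat.card_congr (Equiv.subtypeEquivRight ?_)
    intro t; simp [hd, okB_ff]
  · rw [if_pos (by simp [hd]), VT]
    refine Nat.card_congr (Equiv.subtypeEquivRight ?_)
    intro t; simp [hd, okB_tf]

lemma VAB_pos (m : ℕ) (d : ℕ → Bool) : 1 ≤ VA m d ∧ 1 ≤ VB m d := by
  induction m with
  | zero => rw [VA_zero, VB_zero]; omega
  | succ k ih =>
    have ht : 1 ≤ VT k d := by rw [VT_eq]; omega
    rw [VA_succ, VB_succ]
    cases d k <;> simp <;> omega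

lemma VT_succ (m : ℕ) (d : ℕ → Bool) :
    VT (m+1) d = VT m d + (if d m then VA m d else VB m d) := by
  rw [VT_eq, VA_succ, VB_succ]
  cases d m <;> simp [VT_eq] <;> omega

lemma VT_zero (d : ℕ → Bool) : VT 0 d = 2 := by
  rw [VT_eq, VA_zero, VB_zero]

lemma VT_lower (m : ℕ) (d : ℕ → Bool) : m + 2 ≤ VT m d := by
  induction m with
  | zero => rw [VT_zero]
  | succ k ih =>
    have := VAB_pos k d
    rw [VT_succ]
    cases d k <;> simp <;> omega

lemma VT_upper (m : ℕ) (d : ℕ → Bool) :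
    VA m d ≤ Nat.fib (m+2) ∧ VB m d ≤ Nat.fib (m+2) ∧ VT m d ≤ Nat.fib (m+3) := by
  induction m with
  | zero => rw [VA_zero, VB_zero, VT_zero]; simp [Nat.fib]
  | succ k ih =>
    obtain ⟨h1, h2, h3⟩ := ih
    have hf : Nat.fib (k+2) ≤ Nat.fib (k+3) := Nat.fib_mono (by omega)
    have hfs : Nat.fib (k+4) = Nat.fib (k+2) + Nat.fib (k+3) := Nat.fib_add_two
    have e1 : Nat.fib (k+1+2) = Nat.fib (k+3) := by norm_num
    have e2 : Nat.fib (k+1+3) = Nat.fib (k+4) := by norm_num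
    rw [VA_succ, VB_succ, VT_succ]
    cases d k <;> simp <;> omega

def AltD (m : ℕ) (d : ℕ → Bool) : Prop := ∀ i, i + 1 < m → d i ≠ d (i+1)

lemma alt_spec (m : ℕ) (d : ℕ → Bool) (halt : AltD m d) :
    VT m d = Nat.fib (m+3) ∧
      ∀ k, m = k + 1 → (cond (d k) (VB m d) (VA m d)) = Nat.fib (m+2) := by
  induction m with
  | zero =>
    refine ⟨by rw [VT_zero]; rfl, by omega⟩
  | succ k ih =>
    obtain ⟨ht, hc⟩ := ih (fun i hi => halt i (by omega))
    have hfs : Nat.fib (k+4) = Nat.fib (k+2) + Nat.fib (k+3) := Nat.fib_add_two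
    match k, ht, hc with
    | 0, ht, hc =>
      have hA := VA_zero d
      have hB := VB_zero d
      have hT := VT_zero d
      constructor
      · rw [VT_succ]
        cases d 0 <;> simp [hA, hB, hT] <;> rfl
      · rintro k0 hk0
        have : k0 = 0 := by omega
        subst this
        rw [VA_succ, VB_succ]
        cases d 0 <;> simp [hT] <;> rfl
    | (j+1), ht, hc =>
      have hd : d j ≠ d (j+1) := halt j (by omega)
      have hcj := hc j rfl
      have e1 : Nat.fib (j+1+3) = Nat.fib (j+4) := by norm_num
      have e2 : Nat.fib (j+1+2) = Nat.fib (j+3) := by norm_num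
      have e3 : Nat.fib (j+1+1+3) = Nat.fib (j+5) := by norm_num
      have e4 : Nat.fib (j+1+1+2) = Nat.fib (j+4) := by norm_num
      have hfs2 : Nat.fib (j+5) = Nat.fib (j+3) + Nat.fib (j+4) := Nat.fib_add_two
      constructor
      · rw [VT_succ, e3]
        rw [e1] at ht
        cases hdj : d j <;> cases hdj1 : d (j+1) <;>
          simp [hdj, hdj1] at hd hcj ⊢ <;> rw [e2] at hcj <;> omega
      · rintro k0 hk0
        have : k0 = j + 1 := by omega
        subst this
        rw [VA_succ, VB_succ, e4, e1] at *
        cases hdj1 : d (j+1) <;> simp [hdj1] <;> rw [← ht] <;> rfl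

lemma alt_or_lt (m : ℕ) (d : ℕ → Bool) : AltD m d ∨ VT m d < Nat.fib (m+3) := by
  induction m with
  | zero => left; intro i hi; omega
  | succ k ih =>
    have e1 : Nat.fib (k+1+3) = Nat.fib (k+4) := by norm_num
    have hfs : Nat.fib (k+4) = Nat.fib (k+2) + Nat.fib (k+3) := Nat.fib_add_two
    have ⟨hub1, hub2, hub3⟩ := VT_upper k d
    rcases ih with halt | hlt
    · by_cases halt2 : AltD (k+1) d
      · exact Or.inl halt2
      · right
        -- the violating index must be k-1, so k = j+1 and d j = d (j+1)
        simp only [AltD, not_forall] at halt2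
        obtain ⟨i, hi, hdi⟩ := halt2
        have hdi' : d i = d (i+1) := by
          by_contra hc; exact hdi (fun h => hc h)
        have hik : i + 1 = k := by
          by_contra hne
          exact (halt i (by omega)) hdi'
        obtain ⟨j, rfl⟩ : ∃ j, k = j + 1 := ⟨i, by omega⟩
        have hij : i = j := by omega
        subst hij
        obtain ⟨ht, hc⟩ := alt_spec (i+1) d halt
        have hci := hc i rfl
        have e2 : Nat.fib (i+1+2) = Nat.fib (i+3) := by norm_num
        have e3 : Nat.fib (i+1+3) = Nat.fib (i+4) := by norm_num
        have e4 : Nat.fib (i+1+1+3) = Nat.fib (i+5) := by norm_num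
        have hfs2 : Nat.fib (i+5) = Nat.fib (i+3) + Nat.fib (i+4) := Nat.fib_add_two
        have hfs3 : Nat.fib (i+4) = Nat.fib (i+2) + Nat.fib (i+3) := Nat.fib_add_two
        have hflt : Nat.fib (i+2) < Nat.fib (i+3) := Nat.fib_lt_fib_succ (by omega)
        have hTeq : VT (i+1) d = VA (i+1) d + VB (i+1) d := VT_eq _ _
        have hT1 : VT (i+1) d = Nat.fib (i+4) := by rw [ht, e3]
        have hstep : VT (i+1+1) d
            = VT (i+1) d + (if d (i+1) then VA (i+1) d else VB (i+1) d) := VT_succ _ _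
        rw [hstep, hT1, e4]
        rw [e2] at hci
        cases hdi1 : d (i+1)
        · rw [hdi', hdi1] at hci
          rw [if_neg Bool.false_ne_true]
          simp only [cond_false] at hci
          omega
        · rw [hdi', hdi1] at hci
          rw [if_pos rfl]
          simp only [cond_true] at hci
          omega
    · right
      rw [VT_succ, e1]
      have : (if d k then VA k d else VB k d) ≤ Nat.fib (k+2) := by
        cases d k <;> simpa
      omega

theorem comb_main (m : ℕ) (d : ℕ → Bool) :
    m + 2 ≤ VT m d ∧ VT m d ≤ Nat.fib (m+3) ∧
      (VT m d = Nat.fib (m+3) ↔ AltD m d) := by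
  refine ⟨VT_lower m d, (VT_upper m d).2.2, ?_, fun h => (alt_spec m d h).1⟩
  intro heq
  rcases alt_or_lt m d with h | h
  · exact h
  · omega

lemma ideal_iff_cov {P : Type*} [Fintype P] [PartialOrder P] (I : Finset P) :
    IsIdealF I ↔ ∀ x y : P, y ⋖ x → x ∈ I → y ∈ I := by
  classical
  constructor
  · intro hI x y hyx hx; exact hI x hx y hyx.le
  · intro h x hx y hyx
    haveI : LocallyFiniteOrder P := Fintype.toLocallyFiniteOrder
    have hr : Relation.ReflTransGen (· ⋖ ·) y x := le_iff_reflTransGen_covBy.mp hyx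
    clear hyx
    induction hr using Relation.ReflTransGen.head_induction_on with
    | refl => exact hx
    | head hab _ ih => exact h _ _ hab ih

lemma okB_true_imp (x y : Bool) : okB true x y = true ↔ (y = true → x = true) := by
  cases x <;> cases y <;> simp [okB]

lemma okB_false_imp (x y : Bool) : okB false x y = true ↔ (x = true → y = true) := by
  cases x <;> cases y <;> simp [okB]

/-- for a poset whose Hasse diagram is a path on n elements, the number of
order ideals is at least n+1 and at most Fib(n+2), with the maximum attained exactly by
the zigzag (alternating) orientation. -/
theorem stmt8 {P : Type*} [Fintype P] [PartialOrder P] (n : ℕ) (hn : 1 ≤ n) (e : Fin n ≃ P)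
    (hcov : ∀ i : ℕ, ∀ h : i + 1 < n,
      e ⟨i, by omega⟩ ⋖ e ⟨i + 1, h⟩ ∨ e ⟨i + 1, h⟩ ⋖ e ⟨i, by omega⟩)
    (honly : ∀ x y : P, x ⋖ y → ∃ i : ℕ, ∃ h : i + 1 < n,
      (x = e ⟨i, by omega⟩ ∧ y = e ⟨i + 1, h⟩) ∨
        (y = e ⟨i, by omega⟩ ∧ x = e ⟨i + 1, h⟩)) :
    n + 1 ≤ Nat.card {I : Finset P // IsIdealF I} ∧
      Nat.card {I : Finset P // IsIdealF I} ≤ Nat.fib (n + 2) ∧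
      (Nat.card {I : Finset P // IsIdealF I} = Nat.fib (n + 2) ↔
        ∀ i : ℕ, ∀ h : i + 2 < n,
          (e ⟨i, by omega⟩ ⋖ e ⟨i + 1, by omega⟩ ↔
            e ⟨i + 2, h⟩ ⋖ e ⟨i + 1, by omega⟩)) := by
  obtain ⟨m, rfl⟩ : ∃ m, n = m + 1 := ⟨n - 1, by omega⟩
  classical
  have hnd : ∀ (a b : P), a ⋖ b → ¬ b ⋖ a := fun a b hab hba => lt_asymm hab.lt hba.lt
  obtain ⟨d, hdp⟩ : ∃ d : ℕ → Bool, ∀ i (h : i + 1 < m + 1),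
      (d i = true ↔ e ⟨i, by omega⟩ ⋖ e ⟨i+1, h⟩) ∧
      (d i = false ↔ e ⟨i+1, h⟩ ⋖ e ⟨i, by omega⟩) := by
    refine ⟨fun i => if h : i + 1 < m + 1 then
      decide (e ⟨i, by omega⟩ ⋖ e ⟨i + 1, h⟩) else false, ?_⟩
    intro i h
    have ht : ((if h' : i + 1 < m + 1 then
        decide (e ⟨i, by omega⟩ ⋖ e ⟨i + 1, h'⟩) else false) = true) ↔
        e ⟨i, by omega⟩ ⋖ e ⟨i+1, h⟩ := by
      rw [dif_pos h, decide_eq_true_iff]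
    refine ⟨ht, ?_⟩
    rcases hcov i h with hc | hc
    · rw [Bool.eq_false_iff]
      refine iff_of_false (fun hf => hf (ht.2 hc)) (hnd _ _ hc)
    · refine iff_of_true ?_ hc
      rw [Bool.eq_false_iff]
      intro hf
      exact hnd _ _ hc (ht.1 hf)
  have hdspec : ∀ i (h : i + 1 < m + 1),
      (d i = true ↔ e ⟨i, by omega⟩ ⋖ e ⟨i+1, h⟩) := fun i h => (hdp i h).1
  have hdspec' : ∀ i (h : i + 1 < m + 1),
      (d i = false ↔ e ⟨i+1, h⟩ ⋖ e ⟨i, by omega⟩) := fun i h => (hdp i h).2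
  -- key predicate translation
  have key : ∀ I : Finset P, IsIdealF I ↔
      ValidF (m+1) d (fun j : Fin (m+1) => decide (e j ∈ I)) := by
    intro I
    rw [ideal_iff_cov]
    constructor
    · intro h i hi
      cases h0 : d i
      · rw [okB_false_imp]
        intro hx
        have hc : e ⟨i+1, hi⟩ ⋖ e ⟨i, by omega⟩ := (hdspec' i hi).1 h0
        simp only [decide_eq_true_iff] at hx ⊢
        exact h _ _ hc hx
      · rw [okB_true_imp]
        intro hx
        have hc : e ⟨i, by omega⟩ ⋖ e ⟨i+1, hi⟩ := (hdspec i hi).1 h0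
        simp only [decide_eq_true_iff] at hx ⊢
        exact h _ _ hc hx
    · intro hv x y hcxy hx
      obtain ⟨i, hi, hca⟩ := honly y x hcxy
      rcases hca with ⟨hy, hx'⟩ | ⟨hx', hy⟩
      · have hdt : d i = true := (hdspec i hi).2 (hy ▸ hx' ▸ hcxy)
        have hgot := hv i hi
        rw [hdt, okB_true_imp] at hgot
        simp only [decide_eq_true_iff] at hgot
        rw [hy]
        exact hgot (by rw [← hx']; exact hx)
      · have hdf : d i = false := (hdspec' i hi).2 (hy ▸ hx' ▸ hcxy)
        have hgot := hv i hi
        rw [hdf, okB_false_imp] at hgot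
        simp only [decide_eq_true_iff] at hgot
        rw [hy]
        exact hgot (by rw [← hx']; exact hx)
  -- the cardinality bridge
  have hfun : ∀ s : Fin (m+1) → Bool,
      (fun j : Fin (m+1) => decide (e j ∈ Finset.univ.filter
        (fun p : P => s (e.symm p) = true))) = s := by
    intro s; funext j; simp
  have hcard : Nat.card {I : Finset P // IsIdealF I} = VT m d := by
    rw [VT]
    refine Nat.card_congr ⟨fun I => ⟨fun j => decide (e j ∈ I.1), (key I.1).1 I.2⟩,
      fun s => ⟨Finset.univ.filter (fun p : P => s.1 (e.symm p) = true),
        (key _).2 (by rw [hfun]; exact s.2)⟩, ?_, ?_⟩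
    · rintro ⟨I, hI⟩
      apply Subtype.ext
      simp only
      ext p
      simp
    · rintro ⟨s, hs⟩
      exact Subtype.ext (hfun s)
  obtain ⟨h1, h2, h3⟩ := comb_main m d
  have e5 : Nat.fib (m+1+2) = Nat.fib (m+3) := by norm_num
  rw [hcard, e5]
  refine ⟨by omega, h2, h3.trans ?_⟩
  constructor
  · intro halt i h
    have h1i : i + 1 < m + 1 := by omega
    have hne := halt i (by omega)
    have hfin : (⟨i+1+1, by omega⟩ : Fin (m+1)) = ⟨i+2, h⟩ := by congr 1
    have hiff2 := hdspec' (i+1) (by omega : i + 1 + 1 < m + 1)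
    rw [hfin] at hiff2
    constructor
    · intro hc1
      have hd1 : d i = true := (hdspec i h1i).2 hc1
      have hd2 : d (i+1) = false := by
        cases h2' : d (i+1)
        · rfl
        · exact absurd (hd1.trans h2'.symm) hne
      exact hiff2.1 hd2
    · intro hc2
      have hd2 : d (i+1) = false := hiff2.2 hc2
      have hd1 : d i = true := by
        cases h1' : d i
        · exact absurd (h1'.trans hd2.symm) hne
        · rfl
      exact (hdspec i h1i).1 hd1
  · intro hiff i h
    have h2i : i + 2 < m + 1 := by omega
    have h1i : i + 1 < m + 1 := by omega
    have hfin : (⟨i+1+1, by omega⟩ : Fin (m+1)) = ⟨i+2, h2i⟩ := by congr 1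
    have hiff2 := hdspec' (i+1) (by omega : i + 1 + 1 < m + 1)
    rw [hfin] at hiff2
    have hmain := hiff i h2i
    intro heq
    cases hdi : d i
    · have hd2 : d (i+1) = false := by rw [← heq, hdi]
      have hc2 : e ⟨i+2, h2i⟩ ⋖ e ⟨i+1, by omega⟩ := hiff2.1 hd2
      have hc1 := hmain.2 hc2
      have : d i = true := (hdspec i h1i).2 hc1
      rw [hdi] at this
      exact Bool.false_ne_true this
    · have hc1 : e ⟨i, by omega⟩ ⋖ e ⟨i+1, h1i⟩ := (hdspec i h1i).1 hdi
      have hc2 := hmain.1 hc1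
      have hd2 : d (i+1) = false := hiff2.2 hc2
      rw [← heq, hdi] at hd2
      simp at hd2
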